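/- For a kernel operator C : (R̄_max)^X → (R̄_max)^Y, the map C^♯ ∘ C satisfies C^♯(C(v)) = min{ w ∈ −im C* : w ≥ v }, i.e., it is the projection of v onto −im C* from above, where C* is the transposed kernel operator and −im C* = {−C*u : u ∈ (R̄_max)^Y}. -/

import Mathlib

private lemma key {a b S : EReal} (h : a + b ≤ S) : a + (-S) ≤ -b := by
  rcases eq_or_ne b ⊥ with rb | rb
  · simp [rb]
  rcases eq_or_ne S ⊤ with rS | rS
  · simp [rS]
  rcases eq_or_ne b ⊤ with rb2 | rb2
  · have ha : a = ⊥ := by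
      by_contra ha
      rw [rb2, EReal.add_top_of_ne_bot ha] at h
      exact rS (top_le_iff.mp h)
    simp [ha]
  rcases eq_or_ne S ⊥ with rS2 | rS2
  · have hb : a + b = ⊥ := le_bot_iff.mp (rS2 ▸ h)
    have ha : a = ⊥ := by
      rcases EReal.add_eq_bot_iff.mp hb with h' | h'
      · exact h'
      · exact absurd h' rb
    simp [ha]
  rcases eq_or_ne a ⊥ with ra | ra
  · simp [ra]
  rcases eq_or_ne a ⊤ with ra2 | ra2
  · rw [ra2, EReal.top_add_of_ne_bot rb] at h
    exact absurd (top_le_iff.mp h) rS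
  lift a to ℝ using ⟨ra2, ra⟩
  lift b to ℝ using ⟨rb2, rb⟩
  lift S to ℝ using ⟨rS, rS2⟩
  have h' : a + b ≤ S := by exact_mod_cast h
  exact_mod_cast (by linarith : a + -S ≤ -b)

/-- For a kernel operator `C : (R̄_max)^X → (R̄_max)^Y`, with kernel
`C ∈ (R̄_max)^{Y×X}`, `(C v)(y) = sup_x C(y,x) + v(x)`, the map `C^♯ ∘ C`
is the projection from above onto `−im C*`:
`C^♯(C v) = min {w ∈ −im C* | w ≥ v}`, where `C*` is the transposed kernel
operator `(C* u)(x) = sup_y C(y,x) + u(y)` and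
`−im C* = {−C* u | u ∈ (R̄_max)^Y}`.  Here the residual is
`(C^♯ μ)(x) = −(sup_y C(y,x) + (−μ(y))) = inf_y (−C(y,x) + μ(y))`
with `+∞` absorbing for the addition. -/
theorem residual_proj_on_neg_image {X Y : Type*} (C : Y → X → EReal)
    (v : X → EReal) :
    IsLeast {w : X → EReal |
        (∃ u : Y → EReal, w = fun x => -(⨆ y, C y x + u y)) ∧
        ∀ x, v x ≤ w x}
      (fun x => -(⨆ y, C y x + (-(⨆ x', C y x' + v x')))) := by
  constructor
  · refine ⟨⟨fun y => -(⨆ x', C y x' + v x'), rfl⟩, fun x => ?_⟩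
    rw [← neg_neg (v x), EReal.neg_le_neg_iff]
    refine iSup_le fun y => ?_
    exact key (le_iSup (fun x' => C y x' + v x') x)
  · rintro w ⟨⟨u, rfl⟩, hw⟩
    intro x
    rw [EReal.neg_le_neg_iff]
    refine iSup_le fun y => le_iSup_of_le y (add_le_add (le_refl _) ?_)
    rw [← neg_neg (u y), EReal.neg_le_neg_iff]
    refine iSup_le fun x' => ?_
    have h1 : C y x' + u y ≤ -(v x') := by
      have := hw x'
      have h2 : v x' ≤ -(⨆ y', C y' x' + u y') := this
      have := EReal.le_neg_of_le_neg h2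
      exact (le_iSup (fun y' => C y' x' + u y') y).trans this
    have := key h1
    rwa [neg_neg] at this
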